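/- Let d ≥ 1 and let (s(x))_{x∈ℤ^d} be i.i.d. real random variables with E[max(−s(0),0)] < ∞ and E[max(s(0),0)] = +∞ (so that E[s(0)] = +∞). Then almost surely s does not stabilize, i.e. with probability one there exists no f : ℤ^d → [0,∞) with s(x) + Δf(x) ≤ 1 for every x ∈ ℤ^d. -/

import Mathlib

open MeasureTheory ProbabilityTheory Filter
open scoped BigOperators Topology ENNReal

noncomputable section

/-- The graph Laplacian on `ℤ^d`: `Δf(x) = (2d)⁻¹ ∑_{‖e‖₁=1} f(x+e) − f(x)`. -/
def latLap (d : ℕ) (f : (Fin d → ℤ) → ℝ) (x : Fin d → ℤ) : ℝ :=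
  (2 * (d : ℝ))⁻¹ * (∑ i : Fin d, (f (x + Pi.single i 1) + f (x - Pi.single i 1))) - f x

/-- A divisible sandpile configuration `s : ℤ^d → ℝ` stabilizes iff there is a nonnegative
`u : ℤ^d → [0,∞)` with `s + Δu ≤ 1` everywhere. -/
def Stabilizes (d : ℕ) (s : (Fin d → ℤ) → ℝ) : Prop :=
  ∃ u : (Fin d → ℤ) → ℝ, (∀ x, 0 ≤ u x) ∧ ∀ x, s x + latLap d u x ≤ 1

namespace SandAux


variable {d : ℕ}

/-- the averaging operator `P`. -/
def opT (d : ℕ) (f : (Fin d → ℤ) → ℝ) (x : Fin d → ℤ) : ℝ :=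
  (2 * (d : ℝ))⁻¹ * ∑ i : Fin d, (f (x + Pi.single i 1) + f (x - Pi.single i 1))

lemma latLap_eq (f : (Fin d → ℤ) → ℝ) (x : Fin d → ℤ) :
    latLap d f x = opT d f x - f x := rfl

lemma two_d_inv_nonneg : 0 ≤ (2 * (d : ℝ))⁻¹ := by positivity

lemma opT_mono {f g : (Fin d → ℤ) → ℝ} (h : ∀ x, f x ≤ g x) (x : Fin d → ℤ) :
    opT d f x ≤ opT d g x := by
  apply mul_le_mul_of_nonneg_left _ two_d_inv_nonneg
  exact Finset.sum_le_sum fun i _ => add_le_add (h _) (h _)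

lemma opT_nonneg {f : (Fin d → ℤ) → ℝ} (h : ∀ x, 0 ≤ f x) (x : Fin d → ℤ) :
    0 ≤ opT d f x := by
  apply mul_nonneg two_d_inv_nonneg
  exact Finset.sum_nonneg fun i _ => add_nonneg (h _) (h _)

lemma opT_add (f g : (Fin d → ℤ) → ℝ) (x : Fin d → ℤ) :
    opT d (fun y => f y + g y) x = opT d f x + opT d g x := by
  simp only [opT]
  rw [← mul_add, ← Finset.sum_add_distrib]
  congr 1
  apply Finset.sum_congr rfl
  intro i _
  ring

lemma opT_const (hd : 1 ≤ d) (c : ℝ) (x : Fin d → ℤ) :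
    opT d (fun _ => c) x = c := by
  simp only [opT, Finset.sum_const, Finset.card_univ, Fintype.card_fin, nsmul_eq_mul]
  have hdne : (d : ℝ) ≠ 0 := by
    simp only [ne_eq, Nat.cast_eq_zero]
    omega
  field_simp
  ring

/-- iterate of opT -/
def Tpow (d : ℕ) : ℕ → ((Fin d → ℤ) → ℝ) → ((Fin d → ℤ) → ℝ)
  | 0, f => f
  | (k+1), f => Tpow d k (opT d f)

lemma Tpow_mono {f g : (Fin d → ℤ) → ℝ} (k : ℕ) (h : ∀ x, f x ≤ g x) (x : Fin d → ℤ) :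
    Tpow d k f x ≤ Tpow d k g x := by
  induction k generalizing f g with
  | zero => exact h x
  | succ k ih => exact ih (f := opT d f) (g := opT d g) (fun y => opT_mono h y)

lemma Tpow_nonneg {f : (Fin d → ℤ) → ℝ} (k : ℕ) (h : ∀ x, 0 ≤ f x) (x : Fin d → ℤ) :
    0 ≤ Tpow d k f x := by
  induction k generalizing f with
  | zero => exact h x
  | succ k ih => exact ih (f := opT d f) (fun y => opT_nonneg h y)

lemma Tpow_add (f g : (Fin d → ℤ) → ℝ) (k : ℕ) (x : Fin d → ℤ) :
    Tpow d k (fun y => f y + g y) x = Tpow d k f x + Tpow d k g x := by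
  induction k generalizing f g with
  | zero => rfl
  | succ k ih =>
      show Tpow d k (opT d fun y => f y + g y) x = _
      have : (opT d fun y => f y + g y) = fun y => opT d f y + opT d g y := by
        funext y; exact opT_add f g y
      rw [this]
      exact ih _ _

/-- main iteration inequality -/
lemma Tpow_le (u f : (Fin d → ℤ) → ℝ) (h : ∀ x, opT d u x ≤ u x + f x) (k : ℕ)
    (x : Fin d → ℤ) :
    Tpow d k u x ≤ u x + ∑ j ∈ Finset.range k, Tpow d j f x := by
  induction k generalizing x with
  | zero => simp [Tpow]
  | succ k ih =>
      -- Tpow d (k+1) u = Tpow d k (opT d u)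
      show Tpow d k (opT d u) x ≤ _
      have h1 : Tpow d k (opT d u) x ≤ Tpow d k (fun y => u y + f y) x :=
        Tpow_mono k h x
      have h2 : Tpow d k (fun y => u y + f y) x = Tpow d k u x + Tpow d k f x :=
        Tpow_add u f k x
      have h3 := ih x
      have : Tpow d k (opT d u) x ≤ u x + ∑ j ∈ Finset.range k, Tpow d j f x + Tpow d k f x := by
        rw [h2] at h1; linarith
      rw [Finset.sum_range_succ]
      linarith



/-- pairing of a finitely supported measure with a field -/
def pairF (μ : (Fin d → ℤ) →₀ ℝ) (f : (Fin d → ℤ) → ℝ) : ℝ :=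
  ∑ x ∈ μ.support, μ x * f x

lemma pairF_eq_of_subset {μ : (Fin d → ℤ) →₀ ℝ} {t : Finset (Fin d → ℤ)}
    (h : μ.support ⊆ t) (f : (Fin d → ℤ) → ℝ) :
    pairF μ f = ∑ x ∈ t, μ x * f x := by
  refine Finset.sum_subset h ?_
  intro x _ hx
  rw [Finsupp.notMem_support_iff.mp hx, zero_mul]

lemma pairF_zero (f : (Fin d → ℤ) → ℝ) : pairF (0 : (Fin d → ℤ) →₀ ℝ) f = 0 := by
  simp [pairF]

lemma pairF_add (μ ν : (Fin d → ℤ) →₀ ℝ) (f : (Fin d → ℤ) → ℝ) :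
    pairF (μ + ν) f = pairF μ f + pairF ν f := by
  classical
  have h1 : (μ + ν).support ⊆ μ.support ∪ ν.support := Finsupp.support_add
  rw [pairF_eq_of_subset h1 f, pairF_eq_of_subset (Finset.subset_union_left (s₂ := ν.support)) f,
    pairF_eq_of_subset (Finset.subset_union_right (s₁ := μ.support)) f,
    ← Finset.sum_add_distrib]
  apply Finset.sum_congr rfl
  intro x _
  simp [add_mul]

lemma pairF_smul (c : ℝ) (μ : (Fin d → ℤ) →₀ ℝ) (f : (Fin d → ℤ) → ℝ) :
    pairF (c • μ) f = c * pairF μ f := by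
  classical
  rw [pairF_eq_of_subset (Finsupp.support_smul (b := c) (g := μ)) f, pairF, Finset.mul_sum]
  apply Finset.sum_congr rfl
  intro x _
  simp [mul_assoc]

lemma pairF_finsetSum {ι : Type*} (t : Finset ι) (m : ι → ((Fin d → ℤ) →₀ ℝ))
    (f : (Fin d → ℤ) → ℝ) :
    pairF (∑ i ∈ t, m i) f = ∑ i ∈ t, pairF (m i) f := by
  classical
  induction t using Finset.induction_on with
  | empty => simp [pairF_zero]
  | @insert a t' hx ih =>
      rw [Finset.sum_insert hx, Finset.sum_insert hx, pairF_add, ih]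

lemma pairF_mono {μ : (Fin d → ℤ) →₀ ℝ} (hμ : ∀ x, 0 ≤ μ x) {f g : (Fin d → ℤ) → ℝ}
    (h : ∀ x, f x ≤ g x) : pairF μ f ≤ pairF μ g :=
  Finset.sum_le_sum fun x _ => mul_le_mul_of_nonneg_left (h x) (hμ x)

lemma pairF_nonneg {μ : (Fin d → ℤ) →₀ ℝ} (hμ : ∀ x, 0 ≤ μ x) {f : (Fin d → ℤ) → ℝ}
    (hf : ∀ x, 0 ≤ f x) : 0 ≤ pairF μ f :=
  Finset.sum_nonneg fun x _ => mul_nonneg (hμ x) (hf x)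

lemma pairF_add_f (μ : (Fin d → ℤ) →₀ ℝ) (f g : (Fin d → ℤ) → ℝ) :
    pairF μ (fun x => f x + g x) = pairF μ f + pairF μ g := by
  rw [pairF, pairF, pairF, ← Finset.sum_add_distrib]
  apply Finset.sum_congr rfl
  intro x _
  ring

lemma pairF_sub_f (μ : (Fin d → ℤ) →₀ ℝ) (f g : (Fin d → ℤ) → ℝ) :
    pairF μ (fun x => f x - g x) = pairF μ f - pairF μ g := by
  rw [pairF, pairF, pairF, ← Finset.sum_sub_distrib]
  apply Finset.sum_congr rfl
  intro x _
  ring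

lemma pairF_sum_f {ι : Type*} (μ : (Fin d → ℤ) →₀ ℝ) (t : Finset ι)
    (F : ι → (Fin d → ℤ) → ℝ) :
    pairF μ (fun x => ∑ j ∈ t, F j x) = ∑ j ∈ t, pairF μ (F j) := by
  rw [pairF]
  simp_rw [Finset.mul_sum]
  rw [Finset.sum_comm]
  apply Finset.sum_congr rfl
  intro j _
  rfl

lemma pairF_single (x : Fin d → ℤ) (f : (Fin d → ℤ) → ℝ) :
    pairF (Finsupp.single x (1:ℝ)) f = f x := by
  rw [pairF, Finsupp.support_single_ne_zero x one_ne_zero]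
  simp

/-- shift of a finitely supported measure: `(shiftμ v μ) y = μ (y - v)` -/
def shiftμ (v : Fin d → ℤ) (μ : (Fin d → ℤ) →₀ ℝ) : (Fin d → ℤ) →₀ ℝ :=
  Finsupp.embDomain (Equiv.addRight v).toEmbedding μ

lemma shiftμ_apply (v : Fin d → ℤ) (μ : (Fin d → ℤ) →₀ ℝ) (y : Fin d → ℤ) :
    shiftμ v μ y = μ (y - v) := by
  have : y = (Equiv.addRight v).toEmbedding (y - v) := by
    simp
  rw [shiftμ, this, Finsupp.embDomain_apply_self]
  simp

lemma pairF_shiftμ (v : Fin d → ℤ) (μ : (Fin d → ℤ) →₀ ℝ) (f : (Fin d → ℤ) → ℝ) :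
    pairF (shiftμ v μ) f = pairF μ (fun x => f (x + v)) := by
  show (Finsupp.embDomain _ μ).sum (fun x c => c * f x) = μ.sum (fun x c => c * f (x + v))
  rw [Finsupp.sum_embDomain]
  rfl

/-- one step of the dual (measure) evolution -/
def stepμ (d : ℕ) (μ : (Fin d → ℤ) →₀ ℝ) : (Fin d → ℤ) →₀ ℝ :=
  (2 * (d : ℝ))⁻¹ • ∑ i : Fin d,
    (shiftμ (Pi.single i 1) μ + shiftμ (-(Pi.single i 1)) μ)

lemma stepμ_apply (μ : (Fin d → ℤ) →₀ ℝ) (y : Fin d → ℤ) :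
    stepμ d μ y = (2 * (d : ℝ))⁻¹ * ∑ i : Fin d, (μ (y - Pi.single i 1) + μ (y + Pi.single i 1)) := by
  rw [stepμ, Finsupp.smul_apply, Finsupp.finset_sum_apply]
  simp only [Finsupp.add_apply]
  rw [smul_eq_mul]
  congr 1
  apply Finset.sum_congr rfl
  intro i _
  rw [shiftμ_apply, shiftμ_apply, sub_neg_eq_add]

lemma pairF_stepμ (μ : (Fin d → ℤ) →₀ ℝ) (f : (Fin d → ℤ) → ℝ) :
    pairF μ (opT d f) = pairF (stepμ d μ) f := by
  have hR : pairF (stepμ d μ) f = (2 * (d : ℝ))⁻¹ * ∑ i : Fin d,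
      (pairF μ (fun x => f (x + Pi.single i 1)) + pairF μ (fun x => f (x + -(Pi.single i 1)))) := by
    rw [stepμ, pairF_smul, pairF_finsetSum]
    simp only [pairF_add, pairF_shiftμ]
  rw [hR]
  rw [pairF]
  simp only [opT, Finset.mul_sum]
  rw [Finset.sum_comm]
  apply Finset.sum_congr rfl
  intro i _
  have : ∀ x ∈ μ.support, μ x * ((2 * (d:ℝ))⁻¹ * (f (x + Pi.single i 1) + f (x - Pi.single i 1)))
      = (2 * (d:ℝ))⁻¹ * (μ x * f (x + Pi.single i 1) + μ x * f (x + -(Pi.single i 1))) := by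
    intro x _
    rw [sub_eq_add_neg]
    ring
  rw [Finset.sum_congr rfl this, ← Finset.mul_sum, Finset.sum_add_distrib]
  rfl


lemma stepμ_nonneg {μ : (Fin d → ℤ) →₀ ℝ} (hμ : ∀ y, 0 ≤ μ y) (y : Fin d → ℤ) :
    0 ≤ stepμ d μ y := by
  rw [stepμ_apply]
  exact mul_nonneg two_d_inv_nonneg
    (Finset.sum_nonneg fun i _ => add_nonneg (hμ _) (hμ _))

lemma stepμ_le (hd : 1 ≤ d) {μ : (Fin d → ℤ) →₀ ℝ} {c : ℝ} (hμ : ∀ y, μ y ≤ c)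
    (y : Fin d → ℤ) : stepμ d μ y ≤ c := by
  rw [stepμ_apply]
  have h1 : ∑ i : Fin d, (μ (y - Pi.single i 1) + μ (y + Pi.single i 1))
      ≤ ∑ _i : Fin d, (c + c) :=
    Finset.sum_le_sum fun i _ => add_le_add (hμ _) (hμ _)
  have h2 : (2 * (d : ℝ))⁻¹ * ∑ _i : Fin d, (c + c) = c := by
    rw [Finset.sum_const, Finset.card_univ, Fintype.card_fin, nsmul_eq_mul]
    have hdne : (d : ℝ) ≠ 0 := by
      simp only [ne_eq, Nat.cast_eq_zero]; omega
    field_simp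
    ring
  calc (2 * (d : ℝ))⁻¹ * ∑ i : Fin d, (μ (y - Pi.single i 1) + μ (y + Pi.single i 1))
      ≤ (2 * (d : ℝ))⁻¹ * ∑ _i : Fin d, (c + c) :=
        mul_le_mul_of_nonneg_left h1 two_d_inv_nonneg
    _ = c := h2

lemma stepμ_mass (hd : 1 ≤ d) (μ : (Fin d → ℤ) →₀ ℝ) :
    pairF (stepμ d μ) (fun _ => (1:ℝ)) = pairF μ (fun _ => (1:ℝ)) := by
  rw [← pairF_stepμ]
  exact congrArg (pairF μ) (funext fun x => opT_const hd 1 x)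

/-- our starting uniform measure on `N` points -/
def embN (d : ℕ) (n : ℕ) : Fin d → ℤ := fun _ => (n : ℤ)

lemma embN_inj (hd : 1 ≤ d) : Function.Injective (embN d) := by
  intro a b h
  have h2 := congrFun h ⟨0, hd⟩
  simpa [embN] using h2

def ν (d N : ℕ) : (Fin d → ℤ) →₀ ℝ :=
  ((N : ℝ))⁻¹ • ∑ n ∈ Finset.range N, Finsupp.single (embN d n) (1 : ℝ)

lemma ν_apply (N : ℕ) (y : Fin d → ℤ) :
    ν d N y = (N : ℝ)⁻¹ * ∑ n ∈ Finset.range N, (if embN d n = y then (1:ℝ) else 0) := by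
  rw [ν, Finsupp.smul_apply, Finsupp.finset_sum_apply, smul_eq_mul]
  congr 1
  apply Finset.sum_congr rfl
  intro n _
  rw [Finsupp.single_apply]

lemma ν_nonneg (N : ℕ) (y : Fin d → ℤ) : 0 ≤ ν d N y := by
  rw [ν_apply]
  apply mul_nonneg (by positivity)
  apply Finset.sum_nonneg
  intro n _
  split <;> norm_num

lemma ν_le (hd : 1 ≤ d) (N : ℕ) (y : Fin d → ℤ) : ν d N y ≤ (N : ℝ)⁻¹ := by
  rw [ν_apply]
  have h1 : ∑ n ∈ Finset.range N, (if embN d n = y then (1:ℝ) else 0)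
      = (((Finset.range N).filter (fun n => embN d n = y)).card : ℝ) :=
    Finset.sum_boole _ _
  have h2 : ((Finset.range N).filter (fun n => embN d n = y)).card ≤ 1 := by
    apply Finset.card_le_one.mpr
    intro a ha b hb
    exact embN_inj hd ((Finset.mem_filter.mp ha).2.trans (Finset.mem_filter.mp hb).2.symm)
  rw [h1]
  calc (N : ℝ)⁻¹ * (((Finset.range N).filter (fun n => embN d n = y)).card : ℝ)
      ≤ (N : ℝ)⁻¹ * 1 := by
        apply mul_le_mul_of_nonneg_left _ (by positivity)
        exact_mod_cast h2
    _ = (N : ℝ)⁻¹ := mul_one _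

lemma ν_mass (N : ℕ) (hN : 1 ≤ N) : pairF (ν d N) (fun _ => (1:ℝ)) = 1 := by
  rw [ν, pairF_smul, pairF_finsetSum]
  simp only [pairF_single]
  rw [Finset.sum_const, Finset.card_range, nsmul_eq_mul, mul_one]
  have : (N : ℝ) ≠ 0 := by
    simp only [ne_eq, Nat.cast_eq_zero]; omega
  field_simp

/-- the dual measures: `μseq j = ν P^j` -/
def μseq (d N : ℕ) : ℕ → ((Fin d → ℤ) →₀ ℝ)
  | 0 => ν d N
  | (j+1) => stepμ d (μseq d N j)

lemma μseq_nonneg (N : ℕ) (j : ℕ) : ∀ y, 0 ≤ μseq d N j y := by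
  induction j with
  | zero => exact ν_nonneg N
  | succ j ih => exact fun y => stepμ_nonneg ih y

lemma μseq_le (hd : 1 ≤ d) (N : ℕ) (j : ℕ) : ∀ y, μseq d N j y ≤ (N : ℝ)⁻¹ := by
  induction j with
  | zero => exact ν_le hd N
  | succ j ih => exact fun y => stepμ_le hd ih y

lemma μseq_mass (hd : 1 ≤ d) (N : ℕ) (hN : 1 ≤ N) (j : ℕ) :
    pairF (μseq d N j) (fun _ => (1:ℝ)) = 1 := by
  induction j with
  | zero => exact ν_mass N hN
  | succ j ih => rw [μseq, stepμ_mass hd, ih]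

lemma pairF_μseq (N : ℕ) (j : ℕ) (f : (Fin d → ℤ) → ℝ) :
    pairF (μseq d N j) f = pairF (ν d N) (Tpow d j f) := by
  induction j generalizing f with
  | zero => rfl
  | succ j ih =>
      show pairF (stepμ d (μseq d N j)) f = pairF (ν d N) (Tpow d j (opT d f))
      rw [← pairF_stepμ, ih]

/-- accumulated weights `W_k = ∑_{j<k} ν P^j` -/
def Wk (d N k : ℕ) : (Fin d → ℤ) →₀ ℝ := ∑ j ∈ Finset.range k, μseq d N j

lemma Wk_nonneg (N k : ℕ) (y : Fin d → ℤ) : 0 ≤ Wk d N k y := by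
  rw [Wk, Finsupp.finset_sum_apply]
  exact Finset.sum_nonneg fun j _ => μseq_nonneg N j y

lemma Wk_le (hd : 1 ≤ d) (N k : ℕ) (y : Fin d → ℤ) : Wk d N k y ≤ k * (N : ℝ)⁻¹ := by
  rw [Wk, Finsupp.finset_sum_apply]
  calc ∑ j ∈ Finset.range k, μseq d N j y ≤ ∑ _j ∈ Finset.range k, (N:ℝ)⁻¹ :=
        Finset.sum_le_sum fun j _ => μseq_le hd N j y
    _ = k * (N:ℝ)⁻¹ := by rw [Finset.sum_const, Finset.card_range, nsmul_eq_mul]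

lemma pairF_Wk (N k : ℕ) (f : (Fin d → ℤ) → ℝ) :
    pairF (Wk d N k) f = ∑ j ∈ Finset.range k, pairF (μseq d N j) f :=
  pairF_finsetSum _ _ _

lemma Wk_mass (hd : 1 ≤ d) (N : ℕ) (hN : 1 ≤ N) (k : ℕ) :
    pairF (Wk d N k) (fun _ => (1:ℝ)) = k := by
  rw [pairF_Wk]
  rw [Finset.sum_congr rfl fun j _ => μseq_mass hd N hN j]
  simp

/-- The key deterministic consequence of stabilization. -/
lemma det_key (hd : 1 ≤ d) (N : ℕ) (hN : 1 ≤ N) (g : (Fin d → ℤ) → ℝ)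
    (hstab : Stabilizes d g) :
    ∃ c : ℝ, 0 ≤ c ∧ ∀ k : ℕ, pairF (Wk d N k) g ≤ k + c := by
  obtain ⟨u, hu0, hub⟩ := hstab
  refine ⟨pairF (ν d N) u, pairF_nonneg (ν_nonneg N) hu0, ?_⟩
  intro k
  set f : (Fin d → ℤ) → ℝ := fun x => 1 - g x with hf
  have hTu : ∀ x, opT d u x ≤ u x + f x := by
    intro x
    have h := hub x
    rw [latLap_eq] at h
    simp only [hf]
    linarith
  have h1 : ∀ x, Tpow d k u x ≤ u x + ∑ j ∈ Finset.range k, Tpow d j f x :=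
    Tpow_le u f hTu k
  have h2 : 0 ≤ pairF (ν d N) (Tpow d k u) :=
    pairF_nonneg (ν_nonneg N) (Tpow_nonneg k hu0)
  have h3 : pairF (ν d N) (Tpow d k u)
      ≤ pairF (ν d N) (fun x => u x + ∑ j ∈ Finset.range k, Tpow d j f x) :=
    pairF_mono (ν_nonneg N) h1
  rw [pairF_add_f, pairF_sum_f] at h3
  have h4 : ∀ j, pairF (ν d N) (Tpow d j f) = 1 - pairF (μseq d N j) g := by
    intro j
    rw [← pairF_μseq]
    have : pairF (μseq d N j) f
        = pairF (μseq d N j) (fun _ => (1:ℝ)) - pairF (μseq d N j) g :=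
      pairF_sub_f _ _ _
    rw [this, μseq_mass hd N hN j]
  rw [Finset.sum_congr rfl fun j _ => h4 j, Finset.sum_sub_distrib] at h3
  rw [pairF_Wk]
  simp only [Finset.sum_const, Finset.card_range, nsmul_eq_mul, mul_one] at h3
  linarith

/-! ### Probabilistic part -/

/-- clamp to `[-M, M]` -/
def clampR (M : ℕ) (t : ℝ) : ℝ := max (-(M:ℝ)) (min t (M:ℝ))

/-- the part of `t` below `-M` -/
def zPart (M : ℕ) (t : ℝ) : ℝ := max (-(M:ℝ) - t) 0

lemma clampR_measurable (M : ℕ) : Measurable (clampR M) :=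
  measurable_const.max (measurable_id.min measurable_const)

lemma zPart_measurable (M : ℕ) : Measurable (zPart M) :=
  (measurable_const.sub measurable_id).max measurable_const

lemma zPart_nonneg (M : ℕ) (t : ℝ) : 0 ≤ zPart M t := le_max_right _ _

lemma abs_clampR_le (M : ℕ) (t : ℝ) : |clampR M t| ≤ (M : ℝ) := by
  rw [abs_le, clampR]
  constructor
  · exact le_max_left _ _
  · exact max_le (neg_le_self (Nat.cast_nonneg M)) (min_le_right _ _)

lemma clampR_sub_zPart_le (M : ℕ) (t : ℝ) : clampR M t - zPart M t ≤ t := by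
  rcases le_total t (-(M:ℝ)) with h | h
  · have h1 : clampR M t = -(M:ℝ) := by
      have hM : (0:ℝ) ≤ (M:ℝ) := Nat.cast_nonneg M
      rw [clampR, min_eq_left (by linarith), max_eq_left h]
    have h2 : zPart M t = -(M:ℝ) - t := by
      rw [zPart, max_eq_left (by linarith)]
    rw [h1, h2]; linarith
  · have h2 : zPart M t = 0 := by
      rw [zPart, max_eq_right (by linarith)]
    have h1 : clampR M t ≤ t := max_le h (min_le_left _ _)
    rw [h2]; linarith

lemma min_le_clampR (M : ℕ) (t : ℝ) : min t (M:ℝ) ≤ clampR M t := le_max_right _ _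

section Prob
variable {Ω : Type*} [MeasurableSpace Ω] {P : Measure Ω} [IsProbabilityMeasure P]

/-- the main per-`k` probability bound -/
lemma prob_bound (d : ℕ) (hd : 1 ≤ d)
    (s : (Fin d → ℤ) → Ω → ℝ)
    (hmeas : ∀ x, Measurable (s x))
    (hindep : iIndepFun s P)
    (hident : ∀ x, IdentDistrib (s x) (s 0) P P)
    (M N : ℕ) (hN : 1 ≤ N)
    (hmY : 4 ≤ ∫ ω, clampR M (s 0 ω) ∂P)
    (k : ℕ) (hk : 1 ≤ k) :
    P {ω | pairF (Wk d N k) (fun x => s x ω) ≤ 2*(k:ℝ)}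
      ≤ ENNReal.ofReal ((M:ℝ)^2/(N:ℝ)) + ∫⁻ ω, ENNReal.ofReal (zPart M (s 0 ω)) ∂P := by
  classical
  set W := Wk d N k with hW
  set B := W.support with hB
  set Acomp : (Fin d → ℤ) → Ω → ℝ := fun x ω => W x * clampR M (s x ω) with hAcomp
  set A : Ω → ℝ := ∑ x ∈ B, Acomp x with hA
  set Bz : Ω → ℝ := fun ω => ∑ x ∈ B, W x * zPart M (s x ω) with hBz
  set mY : ℝ := ∫ ω, clampR M (s 0 ω) ∂P with hmYdef
  have hWnn : ∀ x, 0 ≤ W x := Wk_nonneg N k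
  have hWle : ∀ x, W x ≤ k * (N:ℝ)⁻¹ := Wk_le hd N k
  have hsumW : ∑ x ∈ B, W x = (k:ℝ) := by
    have := Wk_mass hd N hN k
    rw [pairF] at this
    simpa using this
  -- integrability and moments of the clamped variables
  have hYmeas : ∀ x : Fin d → ℤ, Measurable (fun ω => clampR M (s x ω)) :=
    fun x => (clampR_measurable M).comp (hmeas x)
  have hYbdd : ∀ (x : Fin d → ℤ) (ω : Ω), |clampR M (s x ω)| ≤ (M:ℝ) :=
    fun x ω => abs_clampR_le M _
  have hYint : ∀ x : Fin d → ℤ, Integrable (fun ω => clampR M (s x ω)) P := by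
    intro x
    apply (memLp_one_iff_integrable).mp
    apply MemLp.of_bound (hYmeas x).aestronglyMeasurable (M:ℝ)
    exact Filter.Eventually.of_forall (fun ω => by
      rw [Real.norm_eq_abs]; exact hYbdd x ω)
  have hYident : ∀ x : Fin d → ℤ,
      IdentDistrib (fun ω => clampR M (s x ω)) (fun ω => clampR M (s 0 ω)) P P :=
    fun x => (hident x).comp (clampR_measurable M)
  have hEY : ∀ x : Fin d → ℤ, ∫ ω, clampR M (s x ω) ∂P = mY :=
    fun x => (hYident x).integral_eq
  -- expectation of A
  have hAcompint : ∀ x ∈ B, Integrable (Acomp x) P :=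
    fun x _ => (hYint x).const_mul (W x)
  have hEA : ∫ ω, A ω ∂P = (k:ℝ) * mY := by
    rw [hA]
    simp only [Finset.sum_apply]
    rw [integral_finset_sum B hAcompint]
    have : ∀ x ∈ B, ∫ ω, Acomp x ω ∂P = W x * mY := by
      intro x _
      rw [hAcomp]
      rw [integral_const_mul (W x) _, hEY x]
    rw [Finset.sum_congr rfl this, ← Finset.sum_mul, hsumW]
  -- MemLp 2 for components
  have hmem2 : ∀ x ∈ B, MemLp (Acomp x) 2 P := by
    intro x _
    apply MemLp.of_bound ((hYmeas x).const_mul (W x)).aestronglyMeasurable (W x * (M:ℝ))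
    apply Filter.Eventually.of_forall
    intro ω
    rw [Real.norm_eq_abs, abs_mul, abs_of_nonneg (hWnn x)]
    exact mul_le_mul_of_nonneg_left (hYbdd x ω) (hWnn x)
  have hmemA : MemLp A 2 P := memLp_finset_sum' B hmem2
  -- variance computation
  have hVarsum : variance A P = ∑ x ∈ B, variance (Acomp x) P := by
    rw [hA]
    apply IndepFun.variance_sum hmem2
    intro x hx y hy hxy
    have h0 : IndepFun (s x) (s y) P := hindep.indepFun hxy
    have := h0.comp ((clampR_measurable M).const_mul (W x))
      ((clampR_measurable M).const_mul (W y))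
    exact this
  have hVarY : ∀ x : Fin d → ℤ,
      variance (fun ω => clampR M (s x ω)) P = variance (fun ω => clampR M (s 0 ω)) P :=
    fun x => (hYident x).variance_eq
  have hYmem2 : MemLp (fun ω => clampR M (s 0 ω)) 2 P := by
    apply MemLp.of_bound (hYmeas 0).aestronglyMeasurable (M:ℝ)
    exact Filter.Eventually.of_forall (fun ω => by
      rw [Real.norm_eq_abs]; exact hYbdd 0 ω)
  have hVarY0 : variance (fun ω => clampR M (s 0 ω)) P ≤ (M:ℝ)^2 := by
    have h1 := variance_le_expectation_sq (μ := P)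
      (X := fun ω => clampR M (s 0 ω)) (hYmeas 0).aestronglyMeasurable
    simp only [Pi.pow_apply] at h1
    have hple : ∀ ω, (clampR M (s 0 ω)) ^ 2 ≤ (M:ℝ)^2 := by
      intro ω
      have := abs_le.mp (hYbdd 0 ω)
      exact sq_le_sq' (by linarith) (by linarith)
    have h2 : ∫ ω, (clampR M (s 0 ω)) ^ 2 ∂P ≤ (M:ℝ)^2 := by
      calc ∫ ω, (clampR M (s 0 ω)) ^ 2 ∂P
          ≤ ∫ _ω, (M:ℝ)^2 ∂P := integral_mono hYmem2.integrable_sq (integrable_const _) hple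
        _ = (M:ℝ)^2 := by simp
    exact h1.trans h2
  have hkpos : (0:ℝ) < (k:ℝ) := by exact_mod_cast Nat.lt_of_lt_of_le Nat.zero_lt_one hk
  have hVarA : variance A P ≤ (M:ℝ)^2 * (k:ℝ)^2 / (N:ℝ) := by
    rw [hVarsum]
    have hterm : ∀ x ∈ B, variance (Acomp x) P ≤ W x * ((k:ℝ) * (N:ℝ)⁻¹ * (M:ℝ)^2) := by
      intro x hx
      have h1 : variance (Acomp x) P
          = (W x)^2 * variance (fun ω => clampR M (s x ω)) P :=
        variance_const_mul (W x) _ P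
      rw [h1, hVarY x]
      have h2 : (W x)^2 * variance (fun ω => clampR M (s 0 ω)) P ≤ (W x)^2 * (M:ℝ)^2 :=
        mul_le_mul_of_nonneg_left hVarY0 (sq_nonneg _)
      have h3 : (W x)^2 ≤ W x * ((k:ℝ) * (N:ℝ)⁻¹) := by
        rw [sq]
        exact mul_le_mul_of_nonneg_left (hWle x) (hWnn x)
      have h4 : (W x)^2 * (M:ℝ)^2 ≤ (W x * ((k:ℝ) * (N:ℝ)⁻¹)) * (M:ℝ)^2 :=
        mul_le_mul_of_nonneg_right h3 (sq_nonneg _)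
      calc (W x)^2 * variance (fun ω => clampR M (s 0 ω)) P
          ≤ (W x)^2 * (M:ℝ)^2 := h2
        _ ≤ (W x * ((k:ℝ) * (N:ℝ)⁻¹)) * (M:ℝ)^2 := h4
        _ = W x * ((k:ℝ) * (N:ℝ)⁻¹ * (M:ℝ)^2) := by ring
    calc ∑ x ∈ B, variance (Acomp x) P
        ≤ ∑ x ∈ B, W x * ((k:ℝ) * (N:ℝ)⁻¹ * (M:ℝ)^2) := Finset.sum_le_sum hterm
      _ = (∑ x ∈ B, W x) * ((k:ℝ) * (N:ℝ)⁻¹ * (M:ℝ)^2) := by rw [← Finset.sum_mul]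
      _ = (k:ℝ) * ((k:ℝ) * (N:ℝ)⁻¹ * (M:ℝ)^2) := by rw [hsumW]
      _ = (M:ℝ)^2 * (k:ℝ)^2 / (N:ℝ) := by ring
  have hcheb : P {ω | (k:ℝ) ≤ |A ω - P[A]|} ≤ ENNReal.ofReal ((M:ℝ)^2/(N:ℝ)) := by
    refine (meas_ge_le_variance_div_sq (μ := P) hmemA hkpos).trans ?_
    apply ENNReal.ofReal_le_ofReal
    have hk2 : (0:ℝ) < (k:ℝ)^2 := by positivity
    rw [div_le_iff₀ hk2]
    calc variance A P ≤ (M:ℝ)^2 * (k:ℝ)^2 / (N:ℝ) := hVarA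
      _ = (M:ℝ)^2 / (N:ℝ) * (k:ℝ)^2 := by ring
  -- Markov inequality for the zPart sum
  have hZmeas : ∀ x : Fin d → ℤ, Measurable (fun ω => zPart M (s x ω)) :=
    fun x => (zPart_measurable M).comp (hmeas x)
  set ζ : ℝ≥0∞ := ∫⁻ ω, ENNReal.ofReal (zPart M (s 0 ω)) ∂P with hζdef
  have hZident : ∀ x : Fin d → ℤ,
      ∫⁻ ω, ENNReal.ofReal (zPart M (s x ω)) ∂P = ζ := by
    intro x
    exact IdentDistrib.lintegral_eq
      ((hident x).comp (ENNReal.measurable_ofReal.comp (zPart_measurable M)))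
  have hBzmeas : Measurable Bz := by
    rw [hBz]
    exact Finset.measurable_sum B (fun x _ => (hZmeas x).const_mul (W x))
  have hlin : ∫⁻ ω, ENNReal.ofReal (Bz ω) ∂P = (k:ℝ≥0∞) * ζ := by
    have hpt : ∀ ω, ENNReal.ofReal (Bz ω)
        = ∑ x ∈ B, ENNReal.ofReal (W x) * ENNReal.ofReal (zPart M (s x ω)) := by
      intro ω
      rw [hBz]
      rw [ENNReal.ofReal_sum_of_nonneg
        (fun x _ => mul_nonneg (hWnn x) (zPart_nonneg M _))]
      apply Finset.sum_congr rfl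
      intro x _
      exact ENNReal.ofReal_mul (hWnn x)
    calc ∫⁻ ω, ENNReal.ofReal (Bz ω) ∂P
        = ∫⁻ ω, ∑ x ∈ B, ENNReal.ofReal (W x) * ENNReal.ofReal (zPart M (s x ω)) ∂P := by
          exact lintegral_congr hpt
      _ = ∑ x ∈ B, ∫⁻ ω, ENNReal.ofReal (W x) * ENNReal.ofReal (zPart M (s x ω)) ∂P := by
          apply lintegral_finset_sum
          exact fun x _ => ((hZmeas x).ennreal_ofReal).const_mul _
      _ = ∑ x ∈ B, ENNReal.ofReal (W x) * ζ := by
          apply Finset.sum_congr rfl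
          intro x _
          rw [lintegral_const_mul _ ((hZmeas x).ennreal_ofReal), hZident x]
      _ = (∑ x ∈ B, ENNReal.ofReal (W x)) * ζ := by rw [← Finset.sum_mul]
      _ = (k:ℝ≥0∞) * ζ := by
          rw [← ENNReal.ofReal_sum_of_nonneg (fun x _ => hWnn x), hsumW,
            ENNReal.ofReal_natCast]
  have hmarkov : P {ω | (k:ℝ) ≤ Bz ω} ≤ ζ := by
    have hsub : {ω | (k:ℝ) ≤ Bz ω} ⊆ {ω | ((k:ℕ):ℝ≥0∞) ≤ ENNReal.ofReal (Bz ω)} := by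
      intro ω hω
      simp only [Set.mem_setOf_eq] at hω ⊢
      rw [← ENNReal.ofReal_natCast]
      exact ENNReal.ofReal_le_ofReal hω
    have hknz : ((k:ℕ):ℝ≥0∞) ≠ 0 := by
      simp only [ne_eq, Nat.cast_eq_zero]
      omega
    have h1 := meas_ge_le_lintegral_div (μ := P)
      (hBzmeas.ennreal_ofReal).aemeasurable (ε := ((k:ℕ):ℝ≥0∞))
      hknz (ENNReal.natCast_ne_top k)
    calc P {ω | (k:ℝ) ≤ Bz ω} ≤ P {ω | ((k:ℕ):ℝ≥0∞) ≤ ENNReal.ofReal (Bz ω)} :=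
          measure_mono hsub
      _ ≤ (∫⁻ ω, ENNReal.ofReal (Bz ω) ∂P) / ((k:ℕ):ℝ≥0∞) := h1
      _ = ((k:ℝ≥0∞) * ζ) / ((k:ℕ):ℝ≥0∞) := by rw [hlin]
      _ = ζ := by
          rw [mul_comm, mul_div_assoc, ENNReal.div_self hknz (ENNReal.natCast_ne_top k), mul_one]
  -- the union bound
  have hincl : {ω | pairF W (fun x => s x ω) ≤ 2*(k:ℝ)}
      ⊆ {ω | (k:ℝ) ≤ |A ω - P[A]|} ∪ {ω | (k:ℝ) ≤ Bz ω} := by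
    intro ω hω
    simp only [Set.mem_setOf_eq] at hω
    by_contra hcon
    simp only [Set.mem_union, Set.mem_setOf_eq, not_or, not_le] at hcon
    obtain ⟨h1, h2⟩ := hcon
    have hABz : A ω - Bz ω ≤ pairF W (fun x => s x ω) := by
      rw [pairF, hA, hBz]
      simp only [Finset.sum_apply]
      rw [← Finset.sum_sub_distrib]
      apply Finset.sum_le_sum
      intro x _
      have h3 := clampR_sub_zPart_le M (s x ω)
      have h4 := mul_le_mul_of_nonneg_left h3 (hWnn x)
      calc Acomp x ω - W x * zPart M (s x ω)
          = W x * (clampR M (s x ω) - zPart M (s x ω)) := by rw [hAcomp]; ring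
        _ ≤ W x * s x ω := h4
    have hEA4 : 4*(k:ℝ) ≤ P[A] := by
      show 4*(k:ℝ) ≤ ∫ ω', A ω' ∂P
      rw [hEA]
      nlinarith
    have h5 := (abs_lt.mp h1).1
    linarith
  calc P {ω | pairF W (fun x => s x ω) ≤ 2*(k:ℝ)}
      ≤ P ({ω | (k:ℝ) ≤ |A ω - P[A]|} ∪ {ω | (k:ℝ) ≤ Bz ω}) := measure_mono hincl
    _ ≤ P {ω | (k:ℝ) ≤ |A ω - P[A]|} + P {ω | (k:ℝ) ≤ Bz ω} := measure_union_le _ _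
    _ ≤ ENNReal.ofReal ((M:ℝ)^2/(N:ℝ)) + ζ := add_le_add hcheb hmarkov


/-- choice of the truncation level `M` -/
lemma exists_M (X : Ω → ℝ) (hX : Measurable X)
    (hneg : ∫⁻ ω, ENNReal.ofReal (max (-(X ω)) 0) ∂P < ⊤)
    (hpos : ∫⁻ ω, ENNReal.ofReal (max (X ω) 0) ∂P = ⊤)
    (δ : ℝ) (hδ : 0 < δ) :
    ∃ M : ℕ, (4 ≤ ∫ ω, clampR M (X ω) ∂P) ∧
      (∫⁻ ω, ENNReal.ofReal (zPart M (X ω)) ∂P ≤ ENNReal.ofReal δ) := by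
  classical
  have hXneg_meas : Measurable fun ω => max (-(X ω)) 0 := hX.neg.max measurable_const
  set negint : ℝ≥0∞ := ∫⁻ ω, ENNReal.ofReal (max (-(X ω)) 0) ∂P with hnegint
  set g : ℕ → Ω → ℝ := fun n ω => min (X ω) (n:ℝ) + max (-(X ω)) 0 with hgdef
  have hg_nonneg : ∀ (n : ℕ) (ω : Ω), 0 ≤ g n ω := by
    intro n ω
    rcases le_total (X ω) 0 with h | h
    · have h1 : min (X ω) (n:ℝ) = X ω := min_eq_left (h.trans (Nat.cast_nonneg n))
      have h2 : max (-(X ω)) 0 = -(X ω) := max_eq_left (neg_nonneg.mpr h)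
      rw [hgdef]; simp only; rw [h1, h2]; ring_nf; exact le_refl 0
    · have h1 : 0 ≤ min (X ω) (n:ℝ) := le_min h (Nat.cast_nonneg n)
      exact add_nonneg h1 (le_max_right _ _)
  have hg_le : ∀ (n : ℕ) (ω : Ω), g n ω ≤ max (X ω) 0 := by
    intro n ω
    rcases le_total (X ω) 0 with h | h
    · have h1 : min (X ω) (n:ℝ) = X ω := min_eq_left (h.trans (Nat.cast_nonneg n))
      have h2 : max (-(X ω)) 0 = -(X ω) := max_eq_left (neg_nonneg.mpr h)
      rw [hgdef]; simp only; rw [h1, h2]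
      have := le_max_right (X ω) 0
      linarith
    · have h2 : max (-(X ω)) 0 = 0 := max_eq_right (neg_nonpos.mpr h)
      rw [hgdef]; simp only; rw [h2]
      have := min_le_left (X ω) (n:ℝ)
      have := le_max_left (X ω) 0
      linarith
  have hg_meas : ∀ n : ℕ, Measurable fun ω => ENNReal.ofReal (g n ω) :=
    fun n => ((hX.min measurable_const).add hXneg_meas).ennreal_ofReal
  have hmono : Monotone (fun (n : ℕ) => fun ω => ENNReal.ofReal (g n ω)) := by
    intro a b hab
    intro ω
    apply ENNReal.ofReal_le_ofReal
    rw [hgdef]; simp only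
    have : min (X ω) (a:ℝ) ≤ min (X ω) (b:ℝ) :=
      min_le_min le_rfl (by exact_mod_cast hab)
    linarith
  have hsup_pt : ∀ ω, (⨆ n : ℕ, ENNReal.ofReal (g n ω)) = ENNReal.ofReal (max (X ω) 0) := by
    intro ω
    apply le_antisymm
    · exact iSup_le fun n => ENNReal.ofReal_le_ofReal (hg_le n ω)
    · have hceil : X ω ≤ ((⌈X ω⌉₊ : ℕ) : ℝ) := Nat.le_ceil _
      have heq : g ⌈X ω⌉₊ ω = max (X ω) 0 := by
        rw [hgdef]; simp only
        rw [min_eq_left hceil]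
        rcases le_total (X ω) 0 with h | h
        · rw [max_eq_left (neg_nonneg.mpr h), max_eq_right h]; ring
        · rw [max_eq_right (neg_nonpos.mpr h), max_eq_left h]; ring
      calc ENNReal.ofReal (max (X ω) 0) = ENNReal.ofReal (g ⌈X ω⌉₊ ω) := by rw [heq]
        _ ≤ ⨆ n : ℕ, ENNReal.ofReal (g n ω) := le_iSup (fun n : ℕ => ENNReal.ofReal (g n ω)) _
  have hlsup : (⨆ n : ℕ, ∫⁻ ω, ENNReal.ofReal (g n ω) ∂P) = ⊤ := by
    rw [← lintegral_iSup hg_meas hmono]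
    rw [show (fun ω => ⨆ n : ℕ, ENNReal.ofReal (g n ω)) = fun ω => ENNReal.ofReal (max (X ω) 0)
      from funext hsup_pt]
    exact hpos
  have hfin : ∀ n : ℕ, ∫⁻ ω, ENNReal.ofReal (g n ω) ∂P < ⊤ := by
    intro n
    have hb : ∀ ω, ENNReal.ofReal (g n ω)
        ≤ ENNReal.ofReal (n:ℝ) + ENNReal.ofReal (max (-(X ω)) 0) := by
      intro ω
      rw [← ENNReal.ofReal_add (Nat.cast_nonneg n) (le_max_right _ _)]
      apply ENNReal.ofReal_le_ofReal
      rw [hgdef]; simp only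
      have := min_le_right (X ω) (n:ℝ)
      linarith
    calc ∫⁻ ω, ENNReal.ofReal (g n ω) ∂P
        ≤ ∫⁻ ω, (ENNReal.ofReal (n:ℝ) + ENNReal.ofReal (max (-(X ω)) 0)) ∂P :=
          lintegral_mono hb
      _ = ENNReal.ofReal (n:ℝ) + negint := by
          rw [lintegral_add_left measurable_const, lintegral_const, measure_univ, mul_one]
      _ < ⊤ := ENNReal.add_lt_top.mpr ⟨ENNReal.ofReal_lt_top, hneg⟩
  have hlt : ENNReal.ofReal 4 + negint < ⨆ n : ℕ, ∫⁻ ω, ENNReal.ofReal (g n ω) ∂P := by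
    rw [hlsup, lt_top_iff_ne_top]
    exact ENNReal.add_ne_top.mpr ⟨ENNReal.ofReal_ne_top, hneg.ne⟩
  obtain ⟨n₀, hn₀⟩ := lt_iSup_iff.mp hlt
  -- integrability facts
  have hXneg_int : Integrable (fun ω => max (-(X ω)) 0) P := by
    refine ⟨hXneg_meas.aestronglyMeasurable, ?_⟩
    rw [HasFiniteIntegral]
    have hc : ∀ ω, ‖max (-(X ω)) 0‖ₑ = ENNReal.ofReal (max (-(X ω)) 0) :=
      fun ω => Real.enorm_eq_ofReal (le_max_right _ _)
    rw [lintegral_congr hc]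
    exact hneg
  have hmin_int : ∀ n : ℕ, Integrable (fun ω => min (X ω) (n:ℝ)) P := by
    intro n
    apply Integrable.mono' (hXneg_int.add (integrable_const (n:ℝ)))
      (hX.min measurable_const).aestronglyMeasurable
    apply Filter.Eventually.of_forall
    intro ω
    rw [Real.norm_eq_abs, abs_le]
    constructor
    · rcases le_total (X ω) 0 with h | h
      · rw [min_eq_left (h.trans (Nat.cast_nonneg n))]
        have h1 : -(X ω) ≤ max (-(X ω)) 0 := le_max_left _ _
        have h2 : (0:ℝ) ≤ (n:ℝ) := Nat.cast_nonneg n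
        simp only [Pi.add_apply]
        linarith
      · have h1 : 0 ≤ min (X ω) (n:ℝ) := le_min h (Nat.cast_nonneg n)
        have h2 : (0:ℝ) ≤ max (-(X ω)) 0 := le_max_right _ _
        have h3 : (0:ℝ) ≤ (n:ℝ) := Nat.cast_nonneg n
        simp only [Pi.add_apply]
        linarith
    · have h1 : min (X ω) (n:ℝ) ≤ (n:ℝ) := min_le_right _ _
      have h2 : (0:ℝ) ≤ max (-(X ω)) 0 := le_max_right _ _
      simp only [Pi.add_apply]
      linarith
  have hg_int_eq : ∫ ω, g n₀ ω ∂P = (∫⁻ ω, ENNReal.ofReal (g n₀ ω) ∂P).toReal := by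
    rw [integral_eq_lintegral_of_nonneg_ae (Filter.Eventually.of_forall (hg_nonneg n₀))
      ((hX.min measurable_const).add hXneg_meas).aestronglyMeasurable]
  have hXneg_eq : ∫ ω, max (-(X ω)) 0 ∂P = negint.toReal := by
    rw [hnegint]
    exact integral_eq_lintegral_of_nonneg_ae
      (Filter.Eventually.of_forall (fun ω => le_max_right _ _))
      hXneg_meas.aestronglyMeasurable
  have hsplit : ∫ ω, g n₀ ω ∂P
      = (∫ ω, min (X ω) ((n₀:ℕ):ℝ) ∂P) + ∫ ω, max (-(X ω)) 0 ∂P := by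
    rw [hgdef]
    exact integral_add (hmin_int n₀) hXneg_int
  have htoReal_le : (ENNReal.ofReal 4 + negint).toReal
      ≤ (∫⁻ ω, ENNReal.ofReal (g n₀ ω) ∂P).toReal := by
    exact (ENNReal.toReal_le_toReal
      (ENNReal.add_ne_top.mpr ⟨ENNReal.ofReal_ne_top, hneg.ne⟩) (hfin n₀).ne).mpr hn₀.le
  have htoReal_eq : (ENNReal.ofReal 4 + negint).toReal = 4 + negint.toReal := by
    rw [ENNReal.toReal_add ENNReal.ofReal_ne_top hneg.ne, ENNReal.toReal_ofReal (by norm_num)]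
  have hEmin : 4 ≤ ∫ ω, min (X ω) ((n₀:ℕ):ℝ) ∂P := by
    have := hg_int_eq
    rw [hsplit, hXneg_eq] at this
    rw [htoReal_eq] at htoReal_le
    linarith
  -- zPart tendsto
  have hζ_tend : Tendsto (fun n : ℕ => ∫⁻ ω, ENNReal.ofReal (zPart n (X ω)) ∂P)
      atTop (𝓝 0) := by
    have h := tendsto_lintegral_of_dominated_convergence (μ := P)
      (F := fun (n : ℕ) ω => ENNReal.ofReal (zPart n (X ω)))
      (f := fun _ => (0:ℝ≥0∞))
      (bound := fun ω => ENNReal.ofReal (max (-(X ω)) 0))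
      (fun n => ((zPart_measurable n).comp hX).ennreal_ofReal)
      ?_ ?_ ?_
    · simpa using h
    · intro n
      apply Filter.Eventually.of_forall
      intro ω
      apply ENNReal.ofReal_le_ofReal
      rw [zPart]
      apply max_le _ (le_max_right _ _)
      have : -(n:ℝ) - X ω ≤ -(X ω) := by
        have : (0:ℝ) ≤ (n:ℝ) := Nat.cast_nonneg n
        linarith
      exact this.trans (le_max_left _ _)
    · exact hneg.ne
    · apply Filter.Eventually.of_forall
      intro ω
      have hev : ∀ᶠ n : ℕ in atTop, ENNReal.ofReal (zPart n (X ω)) = 0 := by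
        rw [Filter.eventually_atTop]
        refine ⟨⌈-(X ω)⌉₊, fun n hn => ?_⟩
        have h1 : -(X ω) ≤ (n:ℝ) := (Nat.le_ceil _).trans (by exact_mod_cast hn)
        have h2 : zPart n (X ω) = 0 := by
          rw [zPart, max_eq_right]
          linarith
        rw [h2, ENNReal.ofReal_zero]
      exact Filter.Tendsto.congr' (hev.mono fun n h => h.symm) tendsto_const_nhds
  obtain ⟨n₁, hn₁⟩ := Filter.eventually_atTop.mp
    (hζ_tend.eventually_lt_const (ENNReal.ofReal_pos.mpr hδ))
  refine ⟨max n₀ n₁, ?_, ?_⟩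
  · -- expectation of clamp at least 4
    have hclamp_int : Integrable (fun ω => clampR (max n₀ n₁) (X ω)) P := by
      apply (memLp_one_iff_integrable).mp
      apply MemLp.of_bound ((clampR_measurable _).comp hX).aestronglyMeasurable
        ((max n₀ n₁ : ℕ):ℝ)
      exact Filter.Eventually.of_forall (fun ω => by
        rw [Real.norm_eq_abs]; exact abs_clampR_le _ _)
    have hle1 : ∀ ω, min (X ω) ((n₀:ℕ):ℝ) ≤ clampR (max n₀ n₁) (X ω) := by
      intro ω
      refine le_trans (min_le_min le_rfl ?_) (min_le_clampR _ _)
      exact_mod_cast Nat.le_max_left n₀ n₁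
    exact hEmin.trans (integral_mono (hmin_int n₀) hclamp_int hle1)
  · exact (hn₁ (max n₀ n₁) (le_max_right _ _)).le

end Prob

end SandAux

/-- If `(s(x))_{x∈ℤ^d}` are i.i.d. with `E[s(0)⁻] < ∞` and `E[s(0)⁺] = +∞`
(so `E[s(0)] = +∞`), then almost surely `s` does not stabilize. -/
theorem divisible_sandpile_infinite_mean_not_stabilize
    {Ω : Type*} [MeasurableSpace Ω] (P : Measure Ω) [IsProbabilityMeasure P]
    (d : ℕ) (hd : 1 ≤ d)
    (s : (Fin d → ℤ) → Ω → ℝ)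
    (hmeas : ∀ x, Measurable (s x))
    (hindep : iIndepFun s P)
    (hident : ∀ x, IdentDistrib (s x) (s 0) P P)
    (hneg : ∫⁻ ω, ENNReal.ofReal (max (-(s 0 ω)) 0) ∂P < ⊤)
    (hpos : ∫⁻ ω, ENNReal.ofReal (max (s 0 ω) 0) ∂P = ⊤) :
    P {ω | Stabilizes d (fun x => s x ω)} = 0 := by
  classical
  open SandAux in
  refine le_antisymm ?_ zero_le
  apply ENNReal.le_of_forall_pos_le_add
  intro ε hε _
  rw [zero_add]
  set δ : ℝ := (ε:ℝ) with hδdef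
  have hδpos : 0 < δ := by exact_mod_cast hε
  obtain ⟨M, hM4, hMζ⟩ := SandAux.exists_M (P := P) (s 0) (hmeas 0) hneg hpos (δ/2)
    (by linarith)
  obtain ⟨N₀, hN₀⟩ := exists_nat_ge (2*(M:ℝ)^2/δ)
  set N : ℕ := N₀ + 1 with hNdef
  have hN1 : 1 ≤ N := by omega
  have hNbound : ENNReal.ofReal ((M:ℝ)^2/(N:ℝ)) ≤ ENNReal.ofReal (δ/2) := by
    apply ENNReal.ofReal_le_ofReal
    have hNpos : (0:ℝ) < (N:ℝ) := by
      have : (0:ℕ) < N := by omega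
      exact_mod_cast this
    have hNge : 2*(M:ℝ)^2/δ ≤ (N:ℝ) := hN₀.trans (by push_cast [hNdef]; linarith)
    rw [div_le_iff₀ hNpos]
    have h2 := (div_le_iff₀ hδpos).mp hNge
    nlinarith
  set G : ℕ → Set Ω := fun C =>
    {ω | ∀ k : ℕ, SandAux.pairF (SandAux.Wk d N k) (fun x => s x ω) ≤ (k:ℝ) + (C:ℝ)} with hG
  have hGmono : Monotone G := by
    intro C C' hCC ω hω k
    exact (hω k).trans (by have := (Nat.cast_le (α := ℝ)).mpr hCC; linarith)
  have hsub : {ω | Stabilizes d (fun x => s x ω)} ⊆ ⋃ C : ℕ, G C := by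
    intro ω hω
    obtain ⟨c, hc0, hc⟩ := SandAux.det_key hd N hN1 (fun x => s x ω) hω
    refine Set.mem_iUnion.mpr ⟨⌈c⌉₊, fun k => (hc k).trans ?_⟩
    have := Nat.le_ceil c
    linarith
  have hGbound : ∀ C : ℕ, P (G C) ≤ ENNReal.ofReal (δ/2) + ENNReal.ofReal (δ/2) := by
    intro C
    have hsub2 : G C ⊆
        {ω | SandAux.pairF (SandAux.Wk d N (C+1)) (fun x => s x ω) ≤ 2*(((C+1):ℕ):ℝ)} := by
      intro ω hω
      have h3 := hω (C+1)
      simp only [Set.mem_setOf_eq] at h3 ⊢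
      push_cast at h3 ⊢
      linarith
    refine (measure_mono hsub2).trans ?_
    refine (SandAux.prob_bound d hd s hmeas hindep hident M N hN1 hM4 (C+1)
      (by omega)).trans ?_
    exact add_le_add hNbound hMζ
  calc P {ω | Stabilizes d (fun x => s x ω)} ≤ P (⋃ C : ℕ, G C) := measure_mono hsub
    _ = ⨆ C : ℕ, P (G C) := hGmono.measure_iUnion
    _ ≤ ENNReal.ofReal (δ/2) + ENNReal.ofReal (δ/2) := iSup_le hGbound
    _ = ENNReal.ofReal δ := by
        rw [← ENNReal.ofReal_add (by linarith) (by linarith)]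
        norm_num
    _ = (ε : ℝ≥0∞) := by rw [hδdef, ENNReal.ofReal_coe_nnreal]
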